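/- Let s₁ᴿ, s₂ᴿ ∈ ℝ and set s₁ = e^{3πi/4}·s₁ᴿ and s₂ = −i·s₂ᴿ. Define p(λ) = λ⁴ − s₁λ³ − s₂λ² + conj(s₁)λ − 1. If λ ∈ ℂ satisfies p(λ) = 0, then λ ≠ 0 and p(1/(iλ)) = 0, i.e. the roots of p are invariant under the map λ ↦ 1/(iλ). -/

import Mathlib

private lemma aux4a (s₁ c₁ s₂ lam : ℂ) (hlam : lam ≠ 0)
    (h1 : Complex.I * s₁ = c₁) (h2 : Complex.I * c₁ = -s₁)
    (hp : lam^4 - s₁*lam^3 - s₂*lam^2 + c₁*lam - 1 = 0) :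
    (1/(Complex.I*lam))^4 - s₁*(1/(Complex.I*lam))^3 - s₂*(1/(Complex.I*lam))^2
      + c₁*(1/(Complex.I*lam)) - 1 = 0 := by
  have hI : Complex.I ≠ 0 := Complex.I_ne_zero
  have hI2 : Complex.I ^ 2 = -1 := Complex.I_sq
  have hne : (Complex.I*lam)^4*(Complex.I*lam)^3*(Complex.I*lam)^2*(Complex.I*lam) ≠ 0 := by
    have h := mul_ne_zero hI hlam
    simp [pow_ne_zero, h]
  field_simp
  linear_combination -hp - lam*h1 + (Complex.I^2*lam^3)*h2 +
    (-s₂*lam^2 - s₁*lam^3 - lam^4*(Complex.I^2-1))*hI2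

private lemma key_exp4a : Complex.I * Complex.exp (3 * Real.pi * Complex.I / 4) =
    (starRingEnd ℂ) (Complex.exp (3 * Real.pi * Complex.I / 4)) := by
  rw [← Complex.exp_conj]
  have hconj : (starRingEnd ℂ) (3 * Real.pi * Complex.I / 4) = -(3 * Real.pi * Complex.I / 4) := by
    simp [map_div₀, map_ofNat, Complex.conj_ofReal, Complex.conj_I]
    ring
  rw [hconj]
  have hI : Complex.I = Complex.exp ((Real.pi : ℂ) * Complex.I / 2) := by
    rw [show (Real.pi : ℂ) * Complex.I / 2 = ((Real.pi / 2 : ℝ) : ℂ) * Complex.I by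
      push_cast; ring]
    rw [Complex.exp_mul_I]
    simp [Complex.cos_ofReal_re, Real.cos_pi_div_two, Real.sin_pi_div_two]
  rw [show Complex.I * Complex.exp (3 * Real.pi * Complex.I / 4)
      = Complex.exp ((Real.pi : ℂ) * Complex.I / 2) * Complex.exp (3 * Real.pi * Complex.I / 4)
    from by rw [← hI]]
  rw [← Complex.exp_add,
    show (Real.pi : ℂ) * Complex.I / 2 + 3 * Real.pi * Complex.I / 4
      = 2 * Real.pi * Complex.I + -(3 * (Real.pi : ℂ) * Complex.I / 4) by ring,
    Complex.exp_add, Complex.exp_two_pi_mul_I, one_mul]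

/-- Case 4a: with `s₁ = e^{3πi/4} s₁ᴿ`, `s₂ = −i s₂ᴿ` (`s₁ᴿ, s₂ᴿ` real), the roots of
`p(λ) = λ⁴ − s₁λ³ − s₂λ² + conj(s₁)λ − 1` are invariant under `λ ↦ 1/(iλ)`. -/
theorem root_symmetry_case4a (s₁R s₂R : ℝ) :
    let s₁ : ℂ := Complex.exp (3 * Real.pi * Complex.I / 4) * (s₁R : ℂ)
    let s₂ : ℂ := -Complex.I * (s₂R : ℂ)
    let p : ℂ → ℂ := fun lam =>
      lam ^ 4 - s₁ * lam ^ 3 - s₂ * lam ^ 2 + (starRingEnd ℂ) s₁ * lam - 1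
    ∀ lam : ℂ, p lam = 0 → lam ≠ 0 ∧ p (1 / (Complex.I * lam)) = 0 := by
  intro s₁ s₂ p lam hp
  have hlam : lam ≠ 0 := by
    rintro rfl
    simp [p] at hp
  refine ⟨hlam, ?_⟩
  have h1 : Complex.I * s₁ = (starRingEnd ℂ) s₁ := by
    simp only [s₁, map_mul, Complex.conj_ofReal]
    rw [← key_exp4a]; ring
  have h2 : Complex.I * (starRingEnd ℂ) s₁ = -s₁ := by
    rw [← h1, show Complex.I * (Complex.I * s₁) = Complex.I ^ 2 * s₁ by ring,
      Complex.I_sq]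
    ring
  have key := aux4a s₁ ((starRingEnd ℂ) s₁) s₂ lam hlam h1 h2 (by
    simpa [p] using hp)
  simpa [p] using key
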